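/- Let φ(w) = 2w + 5/w and ψ(z) = (z² − 3z)/(3z − 1). There do not exist rational numbers a, b, c, d with a·d − b·c ≠ 0 such that, setting m(z) = (a·z + b)/(c·z + d), one has φ(m(z)) = m(ψ(z)) for every z ∈ ℂ satisfying c·z + d ≠ 0, m(z) ≠ 0, 3z − 1 ≠ 0, and c·ψ(z) + d ≠ 0. (That is, although φ and ψ are conjugate over ℂ, they are not conjugate by any element of PGL₂(ℚ): they are inequivalent ℚ-twists.) -/

import Mathlib

noncomputable def phiTwist (w : ℂ) : ℂ := 2 * w + 5 / w

noncomputable def psiTwist (z : ℂ) : ℂ := (z ^ 2 - 3 * z) / (3 * z - 1)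

theorem twists_not_Q_equivalent :
    ¬ ∃ a b c d : ℚ, a * d - b * c ≠ 0 ∧
      ∀ z : ℂ, (c : ℂ) * z + (d : ℂ) ≠ 0 →
        ((a : ℂ) * z + (b : ℂ)) / ((c : ℂ) * z + (d : ℂ)) ≠ 0 →
        3 * z - 1 ≠ 0 →
        (c : ℂ) * psiTwist z + (d : ℂ) ≠ 0 →
        phiTwist (((a : ℂ) * z + (b : ℂ)) / ((c : ℂ) * z + (d : ℂ))) =
          ((a : ℂ) * psiTwist z + (b : ℂ)) / ((c : ℂ) * psiTwist z + (d : ℂ)) := by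
  rintro ⟨a, b, c, d, hdet, h⟩
  by_cases hd : d = 0
  · have hdC : (d : ℂ) = 0 := by exact_mod_cast hd
    have hb : b ≠ 0 := by intro hb; exact hdet (by rw [hd, hb]; ring)
    have hc : c ≠ 0 := by intro hc; exact hdet (by rw [hd, hc]; ring)
    have hbC : (b : ℂ) ≠ 0 := by exact_mod_cast hb
    have hcC : (c : ℂ) ≠ 0 := by exact_mod_cast hc
    by_cases hab : a = b
    · -- z = 1 ; m(1) = 2b/c, ψ(1) = -1, m(-1) = 0
      have hpsi : psiTwist 1 = -1 := by
        simp [psiTwist]; norm_num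
      have hw : (b : ℂ) * 1 + b ≠ 0 := by
        intro hh; exact hbC (by linear_combination hh / 2)
      have hden : (c : ℂ) * 1 + 0 ≠ 0 := by simpa using hcC
      have key := h 1 (by rw [hdC]; exact hden)
        (by rw [hdC, hab]; exact div_ne_zero hw hden)
        (by norm_num) (by rw [hpsi, hdC]; simpa using hcC)
      rw [hpsi, hdC, hab, phiTwist] at key
      have keyQ : 2 * ((b * 1 + b) / (c * 1 + 0)) + 5 / ((b * 1 + b) / (c * 1 + 0))
          = (b * (-1) + b) / (c * (-1) + 0) := by exact_mod_cast key
      have hbb : b + b ≠ 0 := by intro hh; exact hb (by linarith)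
      field_simp [hbb, hc] at keyQ
      have hb2 : 0 < b ^ 2 := by positivity
      have keyQ' : (8 * b ^ 2 + 5 * c ^ 2) * c = 0 := by linear_combination -keyQ
      rcases mul_eq_zero.mp keyQ' with h6 | h6
      · nlinarith [sq_nonneg c, hb2, h6]
      · exact hc h6
    · -- z = -1 ; fixed point: m(-1) = (b-a)/(-c)
      have hpsi : psiTwist (-1) = -1 := by
        simp [psiTwist]; norm_num
      have habQ : a * (-1) + b ≠ 0 := by
        intro hh; exact hab (by linarith)
      have habC : (a : ℂ) * (-1) + b ≠ 0 := by exact_mod_cast habQ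
      have hdenQ : c * (-1) + 0 ≠ 0 := by simpa using hc
      have hdenC : (c : ℂ) * (-1) + 0 ≠ 0 := by exact_mod_cast hdenQ
      have key := h (-1) (by rw [hdC]; exact hdenC)
        (by rw [hdC]; exact div_ne_zero habC hdenC)
        (by norm_num) (by rw [hpsi, hdC]; exact hdenC)
      rw [hpsi, hdC, phiTwist] at key
      have keyQ : 2 * ((a * (-1) + b) / (c * (-1) + 0)) + 5 / ((a * (-1) + b) / (c * (-1) + 0))
          = (a * (-1) + b) / (c * (-1) + 0) := by exact_mod_cast key
      have h1 : -c ≠ 0 := neg_ne_zero.mpr hc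
      have h2 : -a + b ≠ 0 := by intro hh; exact hab (by linarith)
      field_simp [h1, h2] at keyQ
      have h5 : ((-a + b) ^ 2 + 5 * c ^ 2) * c = 0 := by linear_combination c * keyQ
      rcases mul_eq_zero.mp h5 with h6 | h6
      · have hb2 : 0 < (-a + b) ^ 2 := by positivity
        nlinarith [sq_nonneg c, hb2, h6]
      · exact hc h6
  · have hdC : (d : ℂ) ≠ 0 := by exact_mod_cast hd
    by_cases hb : b = 0
    · have hbC : (b : ℂ) = 0 := by exact_mod_cast hb
      have ha : a ≠ 0 := by intro ha; exact hdet (by rw [hb, ha]; ring)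
      have haC : (a : ℂ) ≠ 0 := by exact_mod_cast ha
      by_cases hcd : c = d
      · -- z = 3 : ψ(3) = 0, m(3) = 3a/(4c), m(0) = 0
        have hc : c ≠ 0 := by rw [hcd]; exact hd
        have hcC : (c : ℂ) ≠ 0 := by exact_mod_cast hc
        have hcdC : (c : ℂ) = d := by exact_mod_cast hcd
        have hpsi : psiTwist 3 = 0 := by
          simp [psiTwist]; norm_num
        have hdenQ : c * 3 + d ≠ 0 := by
          rw [← hcd]; intro hh; exact hc (by linarith)
        have hdenC : (c : ℂ) * 3 + d ≠ 0 := by exact_mod_cast hdenQ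
        have hnumQ : a * 3 + b ≠ 0 := by rw [hb]; intro hh; exact ha (by linarith)
        have hnumC : (a : ℂ) * 3 + b ≠ 0 := by exact_mod_cast hnumQ
        have key := h 3 hdenC (div_ne_zero hnumC hdenC)
          (by norm_num) (by rw [hpsi]; simpa using hdC)
        rw [hpsi, hbC, phiTwist] at key
        have keyQ : 2 * ((a * 3 + 0) / (c * 3 + d)) + 5 / ((a * 3 + 0) / (c * 3 + d))
            = (a * 0 + 0) / (c * 0 + d) := by exact_mod_cast key
        have hnumQ' : a * 3 + 0 ≠ 0 := by simpa using (by intro hh; exact ha (by linarith) : a * 3 ≠ 0)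
        field_simp at keyQ
        have ha2 : 0 < a ^ 2 := by positivity
        have hden3 : 3 * c + d ≠ 0 := by intro hh; exact hdenQ (by linarith)
        have k2 : 2 * (a * 3 + 0) ^ 2 + (3 * c + d) ^ 2 * 5 = 0 := by
          have := keyQ
          simp only [zero_mul, zero_div] at this
          exact (div_eq_zero_iff.mp this).resolve_right hden3
        nlinarith [sq_nonneg (c * 3 + d), ha2, k2]
      · -- z = -1 : fixed point m(-1) = -a/(d-c)
        have hdcQ : c * (-1) + d ≠ 0 := by
          intro hh; exact hcd (by linarith)
        have hdcC : (c : ℂ) * (-1) + d ≠ 0 := by exact_mod_cast hdcQ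
        have hnumQ : a * (-1) + b ≠ 0 := by rw [hb]; intro hh; exact ha (by linarith)
        have hnumC : (a : ℂ) * (-1) + b ≠ 0 := by exact_mod_cast hnumQ
        have hpsi : psiTwist (-1) = -1 := by
          simp [psiTwist]; norm_num
        have key := h (-1) hdcC (div_ne_zero hnumC hdcC)
          (by norm_num) (by rw [hpsi]; exact hdcC)
        rw [hpsi, phiTwist] at key
        have keyQ : 2 * ((a * (-1) + b) / (c * (-1) + d)) + 5 / ((a * (-1) + b) / (c * (-1) + d))
            = (a * (-1) + b) / (c * (-1) + d) := by exact_mod_cast key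
        have h1 : -c + d ≠ 0 := by intro hh; exact hcd (by linarith)
        have h2 : -a + b ≠ 0 := by rw [hb]; intro hh; exact ha (by linarith)
        field_simp [h1, h2] at keyQ
        have h5 : ((-a + b) ^ 2 + 5 * (-c + d) ^ 2) * (-c + d) = 0 := by
          linear_combination (-c + d) * keyQ
        rcases mul_eq_zero.mp h5 with h6 | h6
        · have ha2 : 0 < (-a + b) ^ 2 := by positivity
          nlinarith [sq_nonneg (-c + d), ha2, h6]
        · exact h1 h6
    · -- z = 0 : fixed point m(0) = b/d
      have hbC : (b : ℂ) ≠ 0 := by exact_mod_cast hb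
      have hpsi : psiTwist 0 = 0 := by simp [psiTwist]
      have hnumQ : a * 0 + b ≠ 0 := by simpa using hb
      have hnumC : (a : ℂ) * 0 + b ≠ 0 := by exact_mod_cast hnumQ
      have hdenQ : c * 0 + d ≠ 0 := by simpa using hd
      have hdenC : (c : ℂ) * 0 + d ≠ 0 := by exact_mod_cast hdenQ
      have key := h 0 hdenC (div_ne_zero hnumC hdenC)
        (by norm_num) (by rw [hpsi]; exact hdenC)
      rw [hpsi, phiTwist] at key
      have keyQ : 2 * ((a * 0 + b) / (c * 0 + d)) + 5 / ((a * 0 + b) / (c * 0 + d))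
          = (a * 0 + b) / (c * 0 + d) := by exact_mod_cast key
      field_simp [hd] at keyQ
      have h5 : (b ^ 2 + 5 * d ^ 2) * d = 0 := by linear_combination d * keyQ
      rcases mul_eq_zero.mp h5 with h6 | h6
      · have hb2 : 0 < b ^ 2 := by positivity
        nlinarith [sq_nonneg d, hb2, h6]
      · exact hd h6
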